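/- Let Δ be a finite set, k ≤ |Δ|, and suppose R ⊆ Δ × Δ and A ⊆ Δ are such that for every x ∉ A, the set {y : (x,y) ∈ R} has exactly k elements. Then the number of pairs (U, B) where U ⊆ Δ with |U| = k and B ⊆ Δ × Δ such that (i) every x ∈ Δ has exactly k B-successors, (ii) for every x ∈ A and every (x,y) ∈ B we have y ∈ U, and (iii) for every x ∉ A and every y, (x,y) ∈ R iff (x,y) ∈ B, is exactly C(|Δ|, k). -/
import Mathlib


theorem stmt_7 {α : Type*} [Fintype α] [DecidableEq α] (k : ℕ) (hk : k ≤ Fintype.card α)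
    (R : Finset (α × α)) (A : Finset α)
    (hR : ∀ x : α, x ∉ A → (Finset.univ.filter fun y => (x, y) ∈ R).card = k) :
    Nat.card {p : Finset α × Finset (α × α) //
        p.1.card = k ∧
        (∀ x : α, (Finset.univ.filter fun y => (x, y) ∈ p.2).card = k) ∧
        (∀ x ∈ A, ∀ y : α, (x, y) ∈ p.2 → y ∈ p.1) ∧
        (∀ x : α, x ∉ A → ∀ y : α, ((x, y) ∈ R ↔ (x, y) ∈ p.2))} =
      (Fintype.card α).choose k := by
  classical
  set P : Finset α × Finset (α × α) → Prop := fun p =>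
        p.1.card = k ∧
        (∀ x : α, (Finset.univ.filter fun y => (x, y) ∈ p.2).card = k) ∧
        (∀ x ∈ A, ∀ y : α, (x, y) ∈ p.2 → y ∈ p.1) ∧
        (∀ x : α, x ∉ A → ∀ y : α, ((x, y) ∈ R ↔ (x, y) ∈ p.2)) with hP
  let B : Finset α → Finset (α × α) := fun U =>
    Finset.univ.filter (fun q => if q.1 ∈ A then q.2 ∈ U else q ∈ R)
  have hBmem : ∀ U x y, (x, y) ∈ B U ↔ (if x ∈ A then y ∈ U else (x, y) ∈ R) := by
    intro U x y; simp [B]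
  have key : ∀ p, P p → p.2 = B p.1 := by
    rintro ⟨U, b⟩ ⟨h1, h2, h3, h4⟩
    ext ⟨x, y⟩
    rw [hBmem]
    by_cases hx : x ∈ A
    · simp only [hx, if_true]
      constructor
      · exact h3 x hx y
      · intro hy
        have hsub : (Finset.univ.filter fun y => (x, y) ∈ b) ⊆ U := by
          intro z hz
          simp only [Finset.mem_filter] at hz
          exact h3 x hx z hz.2
        have heq : (Finset.univ.filter fun y => (x, y) ∈ b) = U :=
          Finset.eq_of_subset_of_card_le hsub (by rw [h2 x, h1])
        have : y ∈ Finset.univ.filter fun y => (x, y) ∈ b := heq ▸ hy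
        simpa using this
    · simp only [hx, if_false]
      exact (h4 x hx y).symm
  have e : {p : Finset α × Finset (α × α) // P p} ≃ {U : Finset α // U.card = k} :=
    { toFun := fun p => ⟨p.1.1, p.2.1⟩
      invFun := fun U => ⟨(U.1, B U.1), by
        refine ⟨U.2, ?_, ?_, ?_⟩
        · intro x
          by_cases hx : x ∈ A
          · have : (Finset.univ.filter fun y => (x, y) ∈ B U.1) = U.1 := by
              ext y; simp [hBmem, hx]
            rw [this, U.2]
          · have : (Finset.univ.filter fun y => (x, y) ∈ B U.1)
                = Finset.univ.filter fun y => (x, y) ∈ R := by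
              ext y; simp [hBmem, hx]
            rw [this, hR x hx]
        · intro x hx y hy
          rw [hBmem] at hy; simpa [hx] using hy
        · intro x hx y
          rw [hBmem]; simp [hx]⟩
      left_inv := fun p => by
        cases' p with p hp
        have := key p hp
        apply Subtype.ext; simp only [← this]
      right_inv := fun U => rfl }
  rw [Nat.card_eq_of_equiv_fin (e.trans (Fintype.equivFin _))]
  simp [Fintype.card_finset_len]
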